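/- Let y ∈ L¹(0,∞) and suppose x ∈ L¹(0,∞) is an extreme point of Ω(y) = {z ∈ L¹(0,∞) : z ≺ y}. If ∫₀ˢ μ(t;y₊) dt > ∫₀ˢ μ(t;x₊) dt for all s ∈ (t₁, t₂) with 0 ≤ t₁ < t₂ ≤ ∞, then for every s ∈ (t₁, t₂) the rearrangement μ(x₊) is constant on [s, s+ε) for some ε > 0; in particular μ(x₊) is a step function on [t₁, t₂). -/

import Mathlib

open MeasureTheory Set

/-- Decreasing rearrangement of `|f|` with respect to Lebesgue measure on `(0,∞)`. -/
noncomputable def rearr (f : ℝ → ℝ) (t : ℝ) : ℝ :=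
  sInf {s : ℝ | 0 ≤ s ∧ (volume.restrict (Set.Ioi (0:ℝ))) {x | s < |f x|} ≤ ENNReal.ofReal t}

/-- Positive part of a function. -/
noncomputable def posPart' (f : ℝ → ℝ) : ℝ → ℝ := fun t => max (f t) 0

/-- Negative part of a function. -/
noncomputable def negPart' (f : ℝ → ℝ) : ℝ → ℝ := fun t => max (-f t) 0

/-- Hardy–Littlewood–Pólya submajorization on `(0,∞)`. -/
def SubMaj (f g : ℝ → ℝ) : Prop :=
  ∀ t : ℝ, 0 ≤ t →
    (∫ s in Set.Ioc (0:ℝ) t, rearr f s) ≤ ∫ s in Set.Ioc (0:ℝ) t, rearr g s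

/-- Hardy–Littlewood–Pólya majorization on `(0,∞)`:
`f₊ ≺≺ g₊`, `f₋ ≺≺ g₋` and `∫ f = ∫ g`. -/
def Maj (f g : ℝ → ℝ) : Prop :=
  SubMaj (posPart' f) (posPart' g) ∧ SubMaj (negPart' f) (negPart' g) ∧
    (∫ t in Set.Ioi (0:ℝ), f t) = ∫ t in Set.Ioi (0:ℝ), g t

set_option linter.unusedVariables false

namespace S19
open ENNReal

noncomputable def m0 : Measure ℝ := volume.restrict (Set.Ioi 0)
instance : SFinite m0 := by unfold m0; infer_instance

noncomputable def dd (f : ℝ → ℝ) (a : ℝ) : ℝ≥0∞ := m0 {t | a < |f t|}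

lemma rearr_eq_dd (f : ℝ → ℝ) (t : ℝ) :
    rearr f t = sInf {s : ℝ | 0 ≤ s ∧ dd f s ≤ ENNReal.ofReal t} := rfl

lemma dd_anti (f : ℝ → ℝ) : Antitone (dd f) :=
  fun a b hab => measure_mono (fun t ht => lt_of_le_of_lt hab ht)

lemma dd_measurable (f : ℝ → ℝ) : Measurable (dd f) := (dd_anti f).measurable

lemma dd_congr {f g : ℝ → ℝ} (h : f =ᵐ[m0] g) : dd f = dd g := by
  funext a
  apply measure_congr
  filter_upwards [h] with t ht
  change (a < |f t|) = (a < |g t|)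
  rw [ht]

lemma rearr_congr {f g : ℝ → ℝ} (h : f =ᵐ[m0] g) : rearr f = rearr g := by
  funext t
  rw [rearr_eq_dd, rearr_eq_dd, dd_congr h]

lemma rearr_nonneg (f : ℝ → ℝ) (t : ℝ) : 0 ≤ rearr f t := by
  rw [rearr_eq_dd]
  exact Real.sInf_nonneg (fun s hs => hs.1)

lemma aemeasurable_abs {f : ℝ → ℝ} (hf : AEMeasurable f m0) :
    AEMeasurable (fun t => |f t|) m0 := by
  simpa [Real.norm_eq_abs] using hf.norm

/-- layer cake for |f| itself -/
lemma lintegral_abs_eq (f : ℝ → ℝ) (hf : AEMeasurable f m0) :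
    ∫⁻ t, ENNReal.ofReal |f t| ∂m0 = ∫⁻ a in Set.Ioi (0:ℝ), dd f a := by
  have := lintegral_eq_lintegral_meas_lt m0 (f := fun t => |f t|)
    (Filter.Eventually.of_forall fun t => abs_nonneg _) (aemeasurable_abs hf)
  exact this

lemma lintegral_abs_lt_top {f : ℝ → ℝ} (hf : Integrable f m0) :
    ∫⁻ t, ENNReal.ofReal |f t| ∂m0 < ⊤ := by
  have h2 := (hasFiniteIntegral_iff_norm f).1 hf.2
  simpa [Real.norm_eq_abs] using h2

lemma dd_lt_top {f : ℝ → ℝ} (hf : Integrable f m0) {a : ℝ} (ha : 0 < a) :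
    dd f a < ⊤ := by
  have hsub : {t | a < |f t|} ⊆ {t | ENNReal.ofReal a ≤ ENNReal.ofReal |f t|} :=
    fun t ht => ofReal_le_ofReal (le_of_lt ht)
  have hmeas : AEMeasurable (fun t => ENNReal.ofReal |f t|) m0 :=
    (aemeasurable_abs hf.aemeasurable).ennreal_ofReal
  calc dd f a ≤ m0 {t | ENNReal.ofReal a ≤ ENNReal.ofReal |f t|} := measure_mono hsub
    _ ≤ (∫⁻ t, ENNReal.ofReal |f t| ∂m0) / ENNReal.ofReal a :=
        meas_ge_le_lintegral_div hmeas (by simp [ha]) ofReal_ne_top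
    _ < ⊤ := ENNReal.div_lt_top (lintegral_abs_lt_top hf).ne (by simp [ha])

/-- the admissible set is nonempty for `t > 0` -/
lemma S_nonempty {f : ℝ → ℝ} (hf : Integrable f m0) {t : ℝ} (ht : 0 < t) :
    ∃ s : ℝ, 0 ≤ s ∧ dd f s ≤ ENNReal.ofReal t := by
  set C := ∫⁻ u, ENNReal.ofReal |f u| ∂m0 with hC
  have hCt : C < ⊤ := lintegral_abs_lt_top hf
  set s := (C / ENNReal.ofReal t).toReal + 1 with hs
  have hs0 : 0 < s := by positivity
  refine ⟨s, hs0.le, ?_⟩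
  have hsC : C / ENNReal.ofReal t ≤ ENNReal.ofReal s := by
    rw [hs, ENNReal.ofReal_add toReal_nonneg zero_le_one]
    refine le_add_right ?_
    rw [ENNReal.ofReal_toReal]
    exact ENNReal.div_lt_top hCt.ne (by simp [ht]) |>.ne
  have hmeas : AEMeasurable (fun u => ENNReal.ofReal |f u|) m0 :=
    (aemeasurable_abs hf.aemeasurable).ennreal_ofReal
  have hsub : {u | s < |f u|} ⊆ {u | ENNReal.ofReal s ≤ ENNReal.ofReal |f u|} :=
    fun u hu => ofReal_le_ofReal (le_of_lt hu)
  calc dd f s ≤ m0 {u | ENNReal.ofReal s ≤ ENNReal.ofReal |f u|} := measure_mono hsub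
    _ ≤ C / ENNReal.ofReal s := meas_ge_le_lintegral_div hmeas (by simp [hs0]) ofReal_ne_top
    _ ≤ ENNReal.ofReal t := by
        rw [ENNReal.div_le_iff (by simp [hs0]) ofReal_ne_top]
        rw [ENNReal.div_le_iff (by simp [ht]) ofReal_ne_top] at hsC
        rw [mul_comm] at hsC
        exact hsC


def SS (f : ℝ → ℝ) (t : ℝ) : Set ℝ := {s : ℝ | 0 ≤ s ∧ dd f s ≤ ENNReal.ofReal t}
lemma rearr_eq_sInf (f : ℝ → ℝ) (t : ℝ) : rearr f t = sInf (SS f t) := rfl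

lemma SS_nonempty {f : ℝ → ℝ} (hf : Integrable f m0) {t : ℝ} (ht : 0 < t) :
    (SS f t).Nonempty := by
  obtain ⟨s, h1, h2⟩ := S_nonempty hf ht; exact ⟨s, h1, h2⟩

lemma SS_bddBelow (f : ℝ → ℝ) (t : ℝ) : BddBelow (SS f t) := ⟨0, fun s hs => hs.1⟩

lemma SS_mono (f : ℝ → ℝ) {t t' : ℝ} (h : t ≤ t') : SS f t ⊆ SS f t' :=
  fun s hs => ⟨hs.1, le_trans hs.2 (ofReal_le_ofReal h)⟩

lemma rearr_mem_SS {f : ℝ → ℝ} {t : ℝ} (hne : (SS f t).Nonempty) :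
    rearr f t ∈ SS f t := by
  rw [rearr_eq_sInf]
  set σ := sInf (SS f t) with hσ
  have h0 : 0 ≤ σ := le_csInf hne (fun s hs => hs.1)
  refine ⟨h0, ?_⟩
  have key : {u | σ < |f u|} = ⋃ n : ℕ, {u | σ + 1/(n+1) < |f u|} := by
    ext u
    simp only [mem_setOf_eq, mem_iUnion]
    constructor
    · intro h
      obtain ⟨n, hn⟩ := exists_nat_one_div_lt (sub_pos.mpr h)
      exact ⟨n, by linarith⟩
    · rintro ⟨n, hn⟩
      have : (0:ℝ) < 1/(n+1) := by positivity
      linarith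
  have hmono : Monotone fun n : ℕ => {u | σ + 1/(n+1) < |f u|} := by
    intro n m hnm u hu
    simp only [mem_setOf_eq] at hu ⊢
    have h1 : (1:ℝ)/(m+1) ≤ 1/(n+1) := by
      apply one_div_le_one_div_of_le (by positivity)
      have : (n:ℝ) ≤ m := Nat.cast_le.mpr hnm
      linarith
    linarith
  show dd f σ ≤ ENNReal.ofReal t
  unfold dd
  rw [show {t_1 | σ < |f t_1|} = {u | σ < |f u|} from rfl, key,
    Directed.measure_iUnion hmono.directed_le]
  apply iSup_le
  intro n
  have hpos : (0:ℝ) < 1/(n+1) := by positivity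
  obtain ⟨a, haS, ha⟩ := Real.lt_sInf_add_pos hne hpos
  calc m0 {u | σ + 1/(n+1) < |f u|} = dd f (σ + 1/(n+1)) := rfl
    _ ≤ dd f a := dd_anti f ha.le
    _ ≤ ENNReal.ofReal t := haS.2

lemma lt_rearr_iff {f : ℝ → ℝ} (hf : Integrable f m0) {t a : ℝ} (ht : 0 < t) (ha : 0 ≤ a) :
    a < rearr f t ↔ ENNReal.ofReal t < dd f a := by
  constructor
  · intro h
    by_contra hc
    push_neg at hc
    have : a ∈ SS f t := ⟨ha, hc⟩
    have := csInf_le (SS_bddBelow f t) this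
    rw [rearr_eq_sInf] at h
    linarith
  · intro h
    by_contra hc
    push_neg at hc
    have hmem := rearr_mem_SS (SS_nonempty hf ht)
    have : dd f a ≤ dd f (rearr f t) := dd_anti f hc
    exact absurd (le_trans this hmem.2) (not_le.mpr h)

lemma rearr_le_iff {f : ℝ → ℝ} (hf : Integrable f m0) {t a : ℝ} (ht : 0 < t) (ha : 0 ≤ a) :
    rearr f t ≤ a ↔ dd f a ≤ ENNReal.ofReal t := by
  rw [← not_lt, lt_rearr_iff hf ht ha, not_lt]

lemma rearr_antitoneOn {f : ℝ → ℝ} (hf : Integrable f m0) :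
    AntitoneOn (rearr f) (Set.Ioi 0) := by
  intro t ht t' _ htt'
  rw [rearr_eq_sInf, rearr_eq_sInf]
  exact csInf_le_csInf (SS_bddBelow f t') (SS_nonempty hf ht) (SS_mono f htt')

lemma rearr_le_of_le {f : ℝ → ℝ} {t t' : ℝ} (hne : (SS f t).Nonempty) (h : t ≤ t') :
    rearr f t' ≤ rearr f t :=
  csInf_le_csInf (SS_bddBelow f t') hne (SS_mono f h)

lemma rearr_right_cont {f : ℝ → ℝ} (hf : Integrable f m0) {u w ε : ℝ} (hu : 0 ≤ u)
    (hw : 0 ≤ w) (hwu : w < rearr f u) (hε : 0 < ε) :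
    ∃ u', u < u' ∧ u' < u + ε ∧ w < rearr f u' := by
  by_contra h
  push_neg at h
  have key : ∀ ζ : ℝ, 0 < ζ → dd f (w + ζ) ≤ ENNReal.ofReal u := by
    intro ζ hζ
    have h1 : ∀ u', u < u' → u' < u + ε → dd f (w + ζ) ≤ ENNReal.ofReal u' := by
      intro u' hu1 hu2
      have hu'pos : 0 < u' := lt_of_le_of_lt hu hu1
      have hle : rearr f u' ≤ w := h u' hu1 hu2
      have hlt : sInf (SS f u') < w + ζ := by
        rw [rearr_eq_sInf] at hle; linarith
      obtain ⟨a, haS, ha⟩ := (csInf_lt_iff (SS_bddBelow f u') (SS_nonempty hf hu'pos)).1 hlt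
      exact le_trans (dd_anti f ha.le) haS.2
    by_contra hc
    push_neg at hc
    rcases eq_or_ne (dd f (w + ζ)) ⊤ with htop | hfin
    · have := h1 (u + ε/2) (by linarith) (by linarith)
      rw [htop] at this
      exact absurd this (by simp)
    · set c := (dd f (w + ζ)).toReal with hc'
      have hcu : u < c := by
        have := (ENNReal.ofReal_lt_iff_lt_toReal hu hfin).1 hc
        exact this
      set u' := min (u + ε/2) ((u + c)/2) with hu'
      have h1u : u < u' := by
        apply lt_min (by linarith) (by linarith)
      have h2u : u' < u + ε := lt_of_le_of_lt (min_le_left _ _) (by linarith)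
      have h3u : u' < c := lt_of_le_of_lt (min_le_right _ _) (by linarith)
      have := h1 u' h1u h2u
      have hlt2 : ENNReal.ofReal u' < dd f (w + ζ) := by
        rw [ENNReal.ofReal_lt_iff_lt_toReal (le_of_lt (lt_of_le_of_lt hu h1u)) hfin]
        exact h3u
      exact absurd this (not_le.mpr hlt2)
  have hrle : ∀ ζ : ℝ, 0 < ζ → rearr f u ≤ w + ζ := by
    intro ζ hζ
    have : w + ζ ∈ SS f u := ⟨by linarith, key ζ hζ⟩
    rw [rearr_eq_sInf]
    exact csInf_le (SS_bddBelow f u) this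
  have : rearr f u ≤ w := le_of_forall_pos_le_add (fun ζ hζ => hrle ζ hζ)
  linarith

lemma rearr_unbdd {f : ℝ → ℝ} (hf : Integrable f m0) (h : ∀ a : ℝ, 0 ≤ a → dd f a ≠ 0)
    {M u : ℝ} (hM : 0 ≤ M) (hu : 0 < u) : ∃ u', 0 < u' ∧ u' < u ∧ M < rearr f u' := by
  have hdd : dd f M ≠ 0 := h M hM
  rcases eq_or_ne (dd f M) ⊤ with htop | hfin
  · refine ⟨u/2, by linarith, by linarith, ?_⟩
    rw [lt_rearr_iff hf (by linarith) hM, htop]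
    exact ofReal_lt_top
  · set c := (dd f M).toReal with hc
    have hcpos : 0 < c := ENNReal.toReal_pos hdd hfin
    set u' := min (u/2) (c/2) with hu'
    have h1 : 0 < u' := lt_min (by linarith) (by linarith)
    refine ⟨u', h1, lt_of_le_of_lt (min_le_left _ _) (by linarith), ?_⟩
    rw [lt_rearr_iff hf h1 hM]
    rw [ENNReal.ofReal_lt_iff_lt_toReal h1.le hfin]
    exact lt_of_le_of_lt (min_le_right _ _) (by linarith)


lemma exists_chain {f : ℝ → ℝ} (hf : Integrable f m0) {s₀ T : ℝ} (hs₀ : 0 ≤ s₀)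
    (hT : s₀ < T)
    (hfail : ∀ ε : ℝ, 0 < ε → ∃ u, u ∈ Set.Ico s₀ (s₀ + ε) ∧ rearr f u ≠ rearr f s₀) :
    ∃ τ₀ τ₁ τ₂ τ₃ τ₄ τ₅ : ℝ,
      s₀ < τ₀ ∧ τ₀ < τ₁ ∧ τ₁ < τ₂ ∧ τ₂ < τ₃ ∧ τ₃ < τ₄ ∧ τ₄ < τ₅ ∧ τ₅ < T ∧
      0 < rearr f τ₅ ∧ rearr f τ₅ < rearr f τ₄ ∧ rearr f τ₄ < rearr f τ₃ ∧
      rearr f τ₃ < rearr f τ₂ ∧ rearr f τ₂ < rearr f τ₁ ∧ rearr f τ₁ < rearr f τ₀ := by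
  have key : ∀ b : ℝ, s₀ < b → ∃ u, s₀ < u ∧ u < b ∧ rearr f b < rearr f u := by
    by_cases hne : (SS f s₀).Nonempty
    · -- `rearr` is genuinely antitone from `s₀` on
      set α := rearr f s₀ with hα
      have hmono : ∀ u, s₀ ≤ u → rearr f u ≤ α := fun u hu => rearr_le_of_le hne hu
      have hαpos : 0 < α := by
        rcases lt_or_eq_of_le (rearr_nonneg f s₀) with h | h
        · exact h
        · exfalso
          obtain ⟨u₀, ⟨hu₀1, _⟩, hne₀⟩ := hfail 1 one_pos
          have h1 : rearr f u₀ ≤ α := hmono u₀ hu₀1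
          have h2 : 0 ≤ rearr f u₀ := rearr_nonneg f u₀
          apply hne₀
          have : α = 0 := by rw [hα, ← h]
          rw [this] at h1 ⊢
          linarith
      have claimlt : ∀ u, s₀ < u → rearr f u < α := by
        intro u hu
        obtain ⟨u₀, ⟨hu₀1, hu₀2⟩, hne₀⟩ := hfail (u - s₀) (by linarith)
        have hs₀u₀ : s₀ < u₀ := by
          rcases lt_or_eq_of_le hu₀1 with h | h
          · exact h
          · exact absurd (by rw [← h]) hne₀
        have h1 : rearr f u₀ < α := lt_of_le_of_ne (hmono u₀ hu₀1) hne₀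
        have h2 : rearr f u ≤ rearr f u₀ := by
          have hu₀pos : u₀ ∈ Set.Ioi (0:ℝ) := lt_of_le_of_lt hs₀ hs₀u₀
          have hupos : u ∈ Set.Ioi (0:ℝ) := by
            simp only [Set.mem_Ioi]
            linarith [lt_of_le_of_lt hs₀ hs₀u₀, hu₀2]
          exact rearr_antitoneOn hf hu₀pos hupos (by linarith)
        linarith
      intro b hb
      have hw : 0 ≤ rearr f b := rearr_nonneg f b
      obtain ⟨u', h1, h2, h3⟩ := rearr_right_cont hf hs₀ hw (lt_of_lt_of_le (claimlt b hb) (le_of_eq hα.symm) : rearr f b < rearr f s₀) (by linarith : (0:ℝ) < b - s₀)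
      exact ⟨u', h1, by linarith, h3⟩
    · -- `SS f s₀` empty: `s₀ = 0` and `f` essentially unbounded
      have hs₀0 : s₀ = 0 := by
        by_contra h
        have : 0 < s₀ := lt_of_le_of_ne hs₀ (Ne.symm h)
        exact hne (SS_nonempty hf this)
      have hdd : ∀ a : ℝ, 0 ≤ a → dd f a ≠ 0 := by
        intro a ha h0
        exact hne ⟨a, ha, by rw [h0]; exact zero_le⟩
      intro b hb
      have hbpos : 0 < b := by rw [hs₀0] at hb; exact hb
      obtain ⟨u', h1, h2, h3⟩ := rearr_unbdd hf hdd (rearr_nonneg f b) hbpos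
      exact ⟨u', by rw [hs₀0]; exact h1, h2, h3⟩
  obtain ⟨τ₅, ha5, hb5, hc5⟩ := key T hT
  obtain ⟨τ₄, ha4, hb4, hc4⟩ := key τ₅ ha5
  obtain ⟨τ₃, ha3, hb3, hc3⟩ := key τ₄ ha4
  obtain ⟨τ₂, ha2, hb2, hc2⟩ := key τ₃ ha3
  obtain ⟨τ₁, ha1, hb1, hc1⟩ := key τ₂ ha2
  obtain ⟨τ₀, ha0, hb0, hc0⟩ := key τ₁ ha1
  exact ⟨τ₀, τ₁, τ₂, τ₃, τ₄, τ₅, ha0, hb0, hb1, hb2, hb3, hb4, hb5,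
    lt_of_le_of_lt (rearr_nonneg f T) hc5, hc4, hc3, hc2, hc1, hc0⟩


noncomputable def Phi (f : ℝ → ℝ) (T : ℝ) : ℝ≥0∞ :=
  ∫⁻ a in Set.Ioi (0:ℝ), min (dd f a) (ENNReal.ofReal T)

lemma rearr_aemeasurable {f : ℝ → ℝ} (hf : Integrable f m0) (T : ℝ) :
    AEMeasurable (rearr f) (volume.restrict (Set.Ioc 0 T)) := by
  apply aemeasurable_restrict_of_antitoneOn measurableSet_Ioc
  exact (rearr_antitoneOn hf).mono Set.Ioc_subset_Ioi_self

lemma measure_rearr_gt {f : ℝ → ℝ} (hf : Integrable f m0) {T a : ℝ} (hT : 0 < T)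
    (ha : 0 ≤ a) :
    (volume.restrict (Set.Ioc 0 T)) {s | a < rearr f s} = min (dd f a) (ENNReal.ofReal T) := by
  rw [Measure.restrict_apply' measurableSet_Ioc]
  have hset : {s | a < rearr f s} ∩ Set.Ioc 0 T
      = {s | 0 < s ∧ s ≤ T ∧ ENNReal.ofReal s < dd f a} := by
    ext s
    simp only [Set.mem_inter_iff, Set.mem_setOf_eq, Set.mem_Ioc]
    constructor
    · rintro ⟨h1, h2, h3⟩
      exact ⟨h2, h3, (lt_rearr_iff hf h2 ha).1 h1⟩
    · rintro ⟨h1, h2, h3⟩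
      exact ⟨(lt_rearr_iff hf h1 ha).2 h3, h1, h2⟩
  rw [hset]
  rcases eq_or_ne (dd f a) ⊤ with htop | hfin
  · rw [htop]
    have : {s | 0 < s ∧ s ≤ T ∧ ENNReal.ofReal s < (⊤:ℝ≥0∞)} = Set.Ioc 0 T := by
      ext s
      simp only [Set.mem_setOf_eq, Set.mem_Ioc, ofReal_lt_top, and_true]
    rw [this, min_eq_right le_top, Real.volume_Ioc]
    norm_num
  · set D := (dd f a).toReal with hD
    have hDnn : 0 ≤ D := toReal_nonneg
    have hdd : dd f a = ENNReal.ofReal D := (ofReal_toReal hfin).symm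
    have hof : ∀ s : ℝ, 0 < s → (ENNReal.ofReal s < dd f a ↔ s < D) := by
      intro s hs
      rw [hdd]
      rcases eq_or_lt_of_le hDnn with h0 | h0
      · constructor
        · intro h
          exfalso
          rw [← h0] at h
          simpa using lt_of_le_of_lt (by positivity : (0:ℝ≥0∞) ≤ ENNReal.ofReal s) h
        · intro h; linarith
      · rw [ofReal_lt_ofReal_iff h0]
    rcases le_or_gt D T with hDT | hTD
    · have : {s | 0 < s ∧ s ≤ T ∧ ENNReal.ofReal s < dd f a} = Set.Ioo 0 D := by
        ext s
        simp only [Set.mem_setOf_eq, Set.mem_Ioo]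
        constructor
        · rintro ⟨h1, h2, h3⟩
          exact ⟨h1, (hof s h1).1 h3⟩
        · rintro ⟨h1, h2⟩
          exact ⟨h1, by linarith, (hof s h1).2 h2⟩
      rw [this, Real.volume_Ioo, min_eq_left (by rw [hdd]; exact ofReal_le_ofReal hDT), hdd]
      norm_num
    · have : {s | 0 < s ∧ s ≤ T ∧ ENNReal.ofReal s < dd f a} = Set.Ioc 0 T := by
        ext s
        simp only [Set.mem_setOf_eq, Set.mem_Ioc]
        constructor
        · rintro ⟨h1, h2, _⟩
          exact ⟨h1, h2⟩
        · rintro ⟨h1, h2⟩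
          exact ⟨h1, h2, (hof s h1).2 (by linarith)⟩
      rw [this, Real.volume_Ioc, min_eq_right (by rw [hdd]; exact ofReal_le_ofReal hTD.le)]
      norm_num
lemma lint_rearr {f : ℝ → ℝ} (hf : Integrable f m0) {T : ℝ} (hT : 0 < T) :
    ∫⁻ s in Set.Ioc (0:ℝ) T, ENNReal.ofReal (rearr f s) = Phi f T := by
  rw [lintegral_eq_lintegral_meas_lt (volume.restrict (Set.Ioc 0 T))
    (Filter.Eventually.of_forall fun s => rearr_nonneg f s) (rearr_aemeasurable hf T)]
  unfold Phi
  apply setLIntegral_congr_fun measurableSet_Ioi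
  intro a ha
  exact measure_rearr_gt hf hT (le_of_lt ha)

lemma Phi_lt_top {f : ℝ → ℝ} (hf : Integrable f m0) (T : ℝ) : Phi f T < ⊤ := by
  have h1 : Phi f T ≤ ∫⁻ a in Set.Ioi (0:ℝ), dd f a :=
    lintegral_mono fun a => min_le_left _ _
  refine lt_of_le_of_lt h1 ?_
  rw [← lintegral_abs_eq f hf.aemeasurable]
  exact lintegral_abs_lt_top hf

lemma integrableOn_rearr {f : ℝ → ℝ} (hf : Integrable f m0) (T : ℝ) :
    IntegrableOn (rearr f) (Set.Ioc 0 T) volume := by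
  rcases le_or_gt T 0 with hT | hT
  · rw [Set.Ioc_eq_empty (by linarith)]
    exact integrableOn_empty
  · constructor
    · exact (rearr_aemeasurable hf T).aestronglyMeasurable
    · rw [hasFiniteIntegral_iff_norm]
      have : ∀ s, ENNReal.ofReal ‖rearr f s‖ = ENNReal.ofReal (rearr f s) := by
        intro s
        rw [Real.norm_eq_abs, abs_of_nonneg (rearr_nonneg f s)]
      simp_rw [this]
      rw [lint_rearr hf hT]
      exact Phi_lt_top hf T

lemma bridge {f : ℝ → ℝ} (hf : Integrable f m0) {T : ℝ} (hT : 0 < T) :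
    ∫ s in Set.Ioc (0:ℝ) T, rearr f s = (Phi f T).toReal := by
  rw [integral_eq_lintegral_of_nonneg_ae
    (Filter.Eventually.of_forall fun s => rearr_nonneg f s)
    (rearr_aemeasurable hf T).aestronglyMeasurable, lint_rearr hf hT]

lemma ofReal_integral_rearr {f : ℝ → ℝ} (hf : Integrable f m0) {T : ℝ} (hT : 0 < T) :
    ENNReal.ofReal (∫ s in Set.Ioc (0:ℝ) T, rearr f s) = Phi f T := by
  rw [bridge hf hT, ofReal_toReal (Phi_lt_top hf T).ne]


lemma dd_posPart (h : ℝ → ℝ) {a : ℝ} (ha : 0 ≤ a) :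
    dd (posPart' h) a = m0 {t | a < h t} := by
  unfold dd posPart'
  congr 1
  ext t
  simp only [Set.mem_setOf_eq]
  rw [abs_of_nonneg (le_max_right _ _), lt_max_iff]
  constructor
  · rintro (h1 | h1)
    · exact h1
    · linarith
  · exact Or.inl

section Perturb

variable {x' : ℝ → ℝ} {U V : Set ℝ} {η uLo uHi vLo vHi β γ : ℝ}

/-- the perturbed function: `x' - η` on `U`, `x' + η` on `V`. -/
noncomputable def pert (x' : ℝ → ℝ) (U V : Set ℝ) (η : ℝ) : ℝ → ℝ :=
  fun t => x' t + Set.indicator V (fun _ => η) t - Set.indicator U (fun _ => η) t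

lemma pert_of_mem_U (hUV : Disjoint U V) {t : ℝ} (ht : t ∈ U) :
    pert x' U V η t = x' t - η := by
  unfold pert
  rw [Set.indicator_of_mem ht, Set.indicator_of_notMem (Set.disjoint_left.1 hUV ht)]
  ring

lemma pert_of_mem_V (hUV : Disjoint U V) {t : ℝ} (ht : t ∈ V) :
    pert x' U V η t = x' t + η := by
  unfold pert
  rw [Set.indicator_of_mem ht, Set.indicator_of_notMem (Set.disjoint_right.1 hUV ht)]
  ring

lemma pert_of_not_mem {t : ℝ} (htU : t ∉ U) (htV : t ∉ V) :
    pert x' U V η t = x' t := by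
  unfold pert
  rw [Set.indicator_of_notMem htU, Set.indicator_of_notMem htV]
  ring

lemma pert_measurable (hx'm : Measurable x') (hUm : MeasurableSet U)
    (hVm : MeasurableSet V) : Measurable (pert x' U V η) := by
  unfold pert
  exact ((hx'm.add ((measurable_const (a := η)).indicator hVm)).sub
    ((measurable_const (a := η)).indicator hUm))

noncomputable def Dx (x' : ℝ → ℝ) (a : ℝ) : ℝ≥0∞ := m0 {t | a < x' t}

lemma Dx_anti (x' : ℝ → ℝ) : Antitone (Dx x') :=
  fun _ _ hab => measure_mono (fun _ ht => lt_of_le_of_lt hab ht)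

noncomputable def uterm (x' : ℝ → ℝ) (U : Set ℝ) (η a : ℝ) : ℝ≥0∞ :=
  m0 (U ∩ {t | a < x' t ∧ x' t ≤ a + η})

noncomputable def vterm (x' : ℝ → ℝ) (V : Set ℝ) (η a : ℝ) : ℝ≥0∞ :=
  m0 (V ∩ {t | a - η < x' t ∧ x' t ≤ a})

lemma split3 (hUm : MeasurableSet U) (hVm : MeasurableSet V) (hUV : Disjoint U V)
    {S : Set ℝ} (hS : MeasurableSet S) :
    m0 S = m0 (S \ (U ∪ V)) + m0 (S ∩ U) + m0 (S ∩ V) := by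
  have h1 : m0 (S ∩ (U ∪ V)) + m0 (S \ (U ∪ V)) = m0 S :=
    measure_inter_add_diff S (hUm.union hVm)
  have h2 : S ∩ (U ∪ V) = (S ∩ U) ∪ (S ∩ V) := Set.inter_union_distrib_left S U V
  have h3 : m0 ((S ∩ U) ∪ (S ∩ V)) = m0 (S ∩ U) + m0 (S ∩ V) := by
    apply measure_union _ (hS.inter hVm)
    exact hUV.mono inf_le_right inf_le_right
  rw [← h1, h2, h3]
  ring

lemma pert_inter_U (hUV : Disjoint U V) (a : ℝ) :
    {t | a < pert x' U V η t} ∩ U = {t | a + η < x' t} ∩ U := by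
  ext t
  simp only [Set.mem_inter_iff, Set.mem_setOf_eq]
  constructor
  · rintro ⟨h1, h2⟩
    rw [pert_of_mem_U hUV h2] at h1
    exact ⟨by linarith, h2⟩
  · rintro ⟨h1, h2⟩
    rw [pert_of_mem_U hUV h2]
    exact ⟨by linarith, h2⟩

lemma pert_inter_V (hUV : Disjoint U V) (a : ℝ) :
    {t | a < pert x' U V η t} ∩ V = {t | a - η < x' t} ∩ V := by
  ext t
  simp only [Set.mem_inter_iff, Set.mem_setOf_eq]
  constructor
  · rintro ⟨h1, h2⟩
    rw [pert_of_mem_V hUV h2] at h1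
    exact ⟨by linarith, h2⟩
  · rintro ⟨h1, h2⟩
    rw [pert_of_mem_V hUV h2]
    exact ⟨by linarith, h2⟩

lemma pert_diff_UV (a : ℝ) :
    {t | a < pert x' U V η t} \ (U ∪ V) = {t | a < x' t} \ (U ∪ V) := by
  ext t
  simp only [Set.mem_diff, Set.mem_union, Set.mem_setOf_eq]
  constructor
  · rintro ⟨h1, h2⟩
    push_neg at h2
    rw [pert_of_not_mem h2.1 h2.2] at h1
    exact ⟨h1, by tauto⟩
  · rintro ⟨h1, h2⟩
    push_neg at h2
    rw [pert_of_not_mem h2.1 h2.2]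
    exact ⟨h1, by tauto⟩

/-- Key exact identity between the distribution functions. -/
lemma identityA (hx'm : Measurable x') (hUm : MeasurableSet U) (hVm : MeasurableSet V)
    (hUV : Disjoint U V) (hη : 0 < η) (a : ℝ) :
    Dx (pert x' U V η) a + uterm x' U η a = Dx x' a + vterm x' V η a := by
  have hgm : Measurable (pert x' U V η) := by
    apply pert_measurable hx'm hUm hVm
  have hSg : MeasurableSet {t | a < pert x' U V η t} := measurableSet_lt measurable_const hgm
  have hSx : MeasurableSet {t | a < x' t} := measurableSet_lt measurable_const hx'm
  have e1 := split3 hUm hVm hUV hSg (S := {t | a < pert x' U V η t})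
  have e2 := split3 hUm hVm hUV hSx (S := {t | a < x' t})
  rw [pert_inter_U hUV a, pert_inter_V hUV a, pert_diff_UV a] at e1
  -- U piece of x' splits
  have eU : m0 ({t | a < x' t} ∩ U) = m0 ({t | a + η < x' t} ∩ U) + uterm x' U η a := by
    have hsplit : {t | a < x' t} ∩ U
        = ({t | a + η < x' t} ∩ U) ∪ (U ∩ {t | a < x' t ∧ x' t ≤ a + η}) := by
      ext t
      simp only [Set.mem_inter_iff, Set.mem_union, Set.mem_setOf_eq]
      constructor
      · rintro ⟨h1, h2⟩
        rcases le_or_gt (x' t) (a + η) with h3 | h3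
        · exact Or.inr ⟨h2, h1, h3⟩
        · exact Or.inl ⟨h3, h2⟩
      · rintro (⟨h1, h2⟩ | ⟨h1, h2, h3⟩)
        · exact ⟨by linarith, h2⟩
        · exact ⟨h2, h1⟩
    rw [hsplit]
    unfold uterm
    apply measure_union
    · rw [Set.disjoint_left]
      rintro t ⟨h1, _⟩ ⟨_, _, h3⟩
      simp only [Set.mem_setOf_eq] at h1
      linarith
    · exact hUm.inter ((measurableSet_lt measurable_const hx'm).inter
        (measurableSet_le hx'm measurable_const))
  -- V piece of pert splits
  have eV : m0 ({t | a - η < x' t} ∩ V) = m0 ({t | a < x' t} ∩ V) + vterm x' V η a := by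
    have hsplit : {t | a - η < x' t} ∩ V
        = ({t | a < x' t} ∩ V) ∪ (V ∩ {t | a - η < x' t ∧ x' t ≤ a}) := by
      ext t
      simp only [Set.mem_inter_iff, Set.mem_union, Set.mem_setOf_eq]
      constructor
      · rintro ⟨h1, h2⟩
        rcases le_or_gt (x' t) a with h3 | h3
        · exact Or.inr ⟨h2, h1, h3⟩
        · exact Or.inl ⟨h3, h2⟩
      · rintro (⟨h1, h2⟩ | ⟨h1, h2, h3⟩)
        · exact ⟨by linarith, h2⟩
        · exact ⟨h2, h1⟩
    rw [hsplit]
    unfold vterm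
    apply measure_union
    · rw [Set.disjoint_left]
      rintro t ⟨h1, _⟩ ⟨_, _, h3⟩
      simp only [Set.mem_setOf_eq] at h1
      linarith
    · exact hVm.inter ((measurableSet_lt measurable_const hx'm).inter
        (measurableSet_le hx'm measurable_const))
  unfold Dx
  rw [e1, e2, eU, eV]
  ring


lemma pert_ge (hUV : Disjoint U V) (hη : 0 < η) (t : ℝ) :
    x' t - η ≤ pert x' U V η t := by
  by_cases htU : t ∈ U
  · rw [pert_of_mem_U hUV htU]
  · by_cases htV : t ∈ V
    · rw [pert_of_mem_V hUV htV]; linarith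
    · rw [pert_of_not_mem htU htV]; linarith

def Wu (x' : ℝ → ℝ) (U : Set ℝ) (η : ℝ) : Set (ℝ × ℝ) :=
  {p : ℝ × ℝ | p.2 ∈ U ∧ p.1 < x' p.2 ∧ x' p.2 ≤ p.1 + η}

lemma Wu_measurable (hx'm : Measurable x') (hUm : MeasurableSet U) :
    MeasurableSet (Wu x' U η) := by
  apply (hUm.preimage measurable_snd).inter
  exact (measurableSet_lt measurable_fst (hx'm.comp measurable_snd)).inter
    (measurableSet_le (hx'm.comp measurable_snd) (measurable_fst.add_const η))

lemma uterm_eq_section (a : ℝ) :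
    uterm x' U η a = m0 (Prod.mk a ⁻¹' Wu x' U η) := by
  unfold uterm Wu
  congr 1

lemma uterm_measurable (hx'm : Measurable x') (hUm : MeasurableSet U) :
    Measurable (uterm x' U η) := by
  have h := measurable_measure_prodMk_left (ν := m0) (Wu_measurable hx'm hUm (η := η))
  convert h using 1
  exact funext fun a => uterm_eq_section a

lemma vterm_eq_uterm (x' : ℝ → ℝ) (V : Set ℝ) (η a : ℝ) :
    vterm x' V η a = uterm x' V η (a - η) := by
  unfold vterm uterm
  congr 1
  ext t
  simp only [Set.mem_inter_iff, Set.mem_setOf_eq]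
  constructor
  · rintro ⟨hV, h1, h2⟩; exact ⟨hV, by linarith, by linarith⟩
  · rintro ⟨hV, h1, h2⟩; exact ⟨hV, by linarith, by linarith⟩

lemma vterm_measurable (hx'm : Measurable x') (hVm : MeasurableSet V) :
    Measurable (vterm x' V η) := by
  have h := (uterm_measurable hx'm hVm (η := η)).comp (measurable_id.sub_const η)
  convert h using 1
  funext a
  exact vterm_eq_uterm x' V η a

lemma uterm_integral (hx'm : Measurable x') (hUm : MeasurableSet U) (hη : 0 < η)
    (hUpos : ∀ t ∈ U, η < x' t) :
    ∫⁻ a in Set.Ioi (0:ℝ), uterm x' U η a = ENNReal.ofReal η * m0 U := by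
  have hW := Wu_measurable hx'm hUm (η := η)
  have step1 : ∫⁻ a in Set.Ioi (0:ℝ), uterm x' U η a
      = (m0.prod m0) (Wu x' U η) := by
    rw [Measure.prod_apply hW]
    have : ∫⁻ a in Set.Ioi (0:ℝ), uterm x' U η a = ∫⁻ a, uterm x' U η a ∂m0 := rfl
    rw [this]
    apply lintegral_congr
    intro a
    exact uterm_eq_section a
  rw [step1, Measure.prod_apply_symm hW]
  have key : ∀ t : ℝ, m0 ((fun a => (a, t)) ⁻¹' Wu x' U η)
      = Set.indicator U (fun _ => ENNReal.ofReal η) t := by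
    intro t
    by_cases ht : t ∈ U
    · rw [Set.indicator_of_mem ht]
      have hsec : (fun a => (a, t)) ⁻¹' Wu x' U η = Set.Ico (x' t - η) (x' t) := by
        ext a
        simp only [Set.mem_preimage, Wu, Set.mem_setOf_eq, Set.mem_Ico]
        constructor
        · rintro ⟨_, h1, h2⟩; exact ⟨by linarith, h1⟩
        · rintro ⟨h1, h2⟩; exact ⟨ht, h2, by linarith⟩
      rw [hsec]
      have hsub : Set.Ico (x' t - η) (x' t) ⊆ Set.Ioi (0:ℝ) := by
        intro a ha
        have := hUpos t ht
        simp only [Set.mem_Ico] at ha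
        simp only [Set.mem_Ioi]
        linarith [ha.1]
      unfold m0
      rw [Measure.restrict_apply' measurableSet_Ioi,
        Set.inter_eq_self_of_subset_left hsub, Real.volume_Ico]
      congr 1
      ring
    · rw [Set.indicator_of_notMem ht]
      have hsec : (fun a => (a, t)) ⁻¹' Wu x' U η = ∅ := by
        ext a
        simp only [Set.mem_preimage, Wu, Set.mem_setOf_eq, Set.mem_empty_iff_false,
          iff_false, not_and]
        intro h; exact absurd h ht
      rw [hsec]
      simp
  rw [lintegral_congr key, lintegral_indicator hUm]
  rw [setLIntegral_const]

lemma vterm_integral (hx'm : Measurable x') (hVm : MeasurableSet V) (hη : 0 < η)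
    (hVpos : ∀ t ∈ V, 0 < x' t) :
    ∫⁻ a in Set.Ioi (0:ℝ), vterm x' V η a = ENNReal.ofReal η * m0 V := by
  have hW : MeasurableSet {p : ℝ × ℝ | p.2 ∈ V ∧ p.1 - η < x' p.2 ∧ x' p.2 ≤ p.1} := by
    apply (hVm.preimage measurable_snd).inter
    exact (measurableSet_lt (measurable_fst.sub_const η) (hx'm.comp measurable_snd)).inter
      (measurableSet_le (hx'm.comp measurable_snd) measurable_fst)
  have step1 : ∫⁻ a in Set.Ioi (0:ℝ), vterm x' V η a
      = (m0.prod m0) {p : ℝ × ℝ | p.2 ∈ V ∧ p.1 - η < x' p.2 ∧ x' p.2 ≤ p.1} := by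
    rw [Measure.prod_apply hW]
    apply lintegral_congr
    intro a
    unfold vterm
    congr 1
  rw [step1, Measure.prod_apply_symm hW]
  have key : ∀ t : ℝ, m0 ((fun a => (a, t)) ⁻¹' {p : ℝ × ℝ | p.2 ∈ V ∧ p.1 - η < x' p.2 ∧ x' p.2 ≤ p.1})
      = Set.indicator V (fun _ => ENNReal.ofReal η) t := by
    intro t
    by_cases ht : t ∈ V
    · rw [Set.indicator_of_mem ht]
      have hsec : (fun a => (a, t)) ⁻¹' {p : ℝ × ℝ | p.2 ∈ V ∧ p.1 - η < x' p.2 ∧ x' p.2 ≤ p.1}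
          = Set.Ico (x' t) (x' t + η) := by
        ext a
        simp only [Set.mem_preimage, Set.mem_setOf_eq, Set.mem_Ico]
        constructor
        · rintro ⟨_, h1, h2⟩; exact ⟨h2, by linarith⟩
        · rintro ⟨h1, h2⟩; exact ⟨ht, by linarith, h1⟩
      rw [hsec]
      have hsub : Set.Ico (x' t) (x' t + η) ⊆ Set.Ioi (0:ℝ) := by
        intro a ha
        have := hVpos t ht
        simp only [Set.mem_Ico] at ha
        simp only [Set.mem_Ioi]
        linarith [ha.1]
      unfold m0
      rw [Measure.restrict_apply' measurableSet_Ioi,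
        Set.inter_eq_self_of_subset_left hsub, Real.volume_Ico]
      congr 1
      ring
    · rw [Set.indicator_of_notMem ht]
      have hsec : (fun a => (a, t)) ⁻¹' {p : ℝ × ℝ | p.2 ∈ V ∧ p.1 - η < x' p.2 ∧ x' p.2 ≤ p.1} = ∅ := by
        ext a
        simp only [Set.mem_preimage, Set.mem_setOf_eq, Set.mem_empty_iff_false,
          iff_false, not_and]
        intro h; exact absurd h ht
      rw [hsec]
      simp
  rw [lintegral_congr key, lintegral_indicator hVm]
  rw [setLIntegral_const]

/-- upper bound : `Dg ≤ Dx + vterm`. -/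
lemma boundB (hUV : Disjoint U V) (hη : 0 < η) (a : ℝ) :
    Dx (pert x' U V η) a ≤ Dx x' a + vterm x' V η a := by
  unfold Dx vterm
  refine le_trans (measure_mono ?_) (measure_union_le _ _)
  intro t ht
  simp only [Set.mem_setOf_eq] at ht
  simp only [Set.mem_union, Set.mem_inter_iff, Set.mem_setOf_eq]
  by_cases htU : t ∈ U
  · rw [pert_of_mem_U hUV htU] at ht
    exact Or.inl (by linarith)
  · by_cases htV : t ∈ V
    · rw [pert_of_mem_V hUV htV] at ht
      rcases lt_or_ge a (x' t) with h | h
      · exact Or.inl h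
      · exact Or.inr ⟨htV, by linarith, h⟩
    · rw [pert_of_not_mem htU htV] at ht
      exact Or.inl ht

lemma min_add_le {p q c r : ℝ≥0∞} (h : p ≤ q + r) : min p c ≤ min q c + r := by
  rcases le_total q c with h1 | h1
  · rw [min_eq_left h1]
    exact le_trans (min_le_left _ _) h
  · rw [min_eq_right h1]
    exact le_add_right (min_le_right _ _)

/-- mid-`t` estimate. -/
lemma midT (hUV : Disjoint U V) (hη : 0 < η) (c : ℝ≥0∞) (a : ℝ) :
    min (Dx (pert x' U V η) a) c ≤ min (Dx x' a) c + vterm x' V η a :=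
  min_add_le (boundB hUV hη a)

/-- small-`t` estimate. -/
lemma smallT (hUV : Disjoint U V) (hη : 0 < η)
    (hUhi : ∀ t ∈ U, x' t ≤ uHi) (hVhi : ∀ t ∈ V, x' t ≤ vHi)
    (huγ : uHi + 2*η ≤ γ) (hvγ : vHi + 2*η ≤ γ)
    {τ₀ : ℝ} (hγD : ∀ a : ℝ, 0 ≤ a → a < γ → ENNReal.ofReal τ₀ < Dx x' a)
    {c : ℝ≥0∞} (hc : c ≤ ENNReal.ofReal τ₀) {a : ℝ} (ha : 0 ≤ a) :
    min (Dx (pert x' U V η) a) c ≤ min (Dx x' a) c := by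
  rcases lt_or_ge (a + η) γ with hcase | hcase
  · -- both distribution values exceed `c`
    have h1 : Dx x' (a + η) ≤ Dx (pert x' U V η) a := by
      apply measure_mono
      intro t ht
      simp only [Set.mem_setOf_eq] at ht ⊢
      have := pert_ge hUV hη t (x' := x')
      linarith
    have h2 : ENNReal.ofReal τ₀ < Dx x' (a + η) := hγD (a + η) (by linarith) hcase
    have h3 : c ≤ Dx (pert x' U V η) a := le_trans hc (le_trans h2.le h1)
    have h4 : c ≤ Dx x' a := le_trans hc (le_trans h2.le (Dx_anti x' (by linarith)))
    rw [min_eq_right h3, min_eq_right h4]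
  · -- the perturbed distribution is dominated
    apply min_le_min _ le_rfl
    apply measure_mono
    intro t ht
    simp only [Set.mem_setOf_eq] at ht ⊢
    by_cases htU : t ∈ U
    · rw [pert_of_mem_U hUV htU] at ht
      linarith
    · by_cases htV : t ∈ V
      · rw [pert_of_mem_V hUV htV] at ht
        have := hVhi t htV
        linarith
      · rw [pert_of_not_mem htU htV] at ht
        exact ht

/-- large-`t` exact identity after truncation. -/
lemma largeT_pointwise (hx'm : Measurable x') (hUm : MeasurableSet U)
    (hVm : MeasurableSet V) (hUV : Disjoint U V) (hη : 0 < η)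
    (hUlo : ∀ t ∈ U, uLo < x' t) (hVlo : ∀ t ∈ V, vLo < x' t)
    (hβ0 : 0 < β) (huβ : β + η ≤ uLo) (hvβ : β + η ≤ vLo)
    {τ₅ : ℝ} (hβD : Dx x' β ≤ ENNReal.ofReal τ₅)
    {c : ℝ≥0∞} (hc : ENNReal.ofReal τ₅ + m0 V ≤ c) (a : ℝ) :
    min (Dx (pert x' U V η) a) c + uterm x' U η a
      = min (Dx x' a) c + vterm x' V η a := by
  by_cases hzero : uterm x' U η a = 0 ∧ vterm x' V η a = 0
  · have hid := identityA hx'm hUm hVm hUV hη a (x' := x')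
    rw [hzero.1, hzero.2, add_zero, add_zero] at hid ⊢
    rw [hid]
  · -- the interesting zone: `a > β`
    have haβ : β < a := by
      rcases not_and_or.1 hzero with h | h
      · have : (U ∩ {t | a < x' t ∧ x' t ≤ a + η}).Nonempty := by
          rw [Set.nonempty_iff_ne_empty]
          intro he
          exact h (by unfold uterm; rw [he]; simp)
        obtain ⟨t, htU, _, ht2⟩ := this
        have := hUlo t htU
        linarith
      · have : (V ∩ {t | a - η < x' t ∧ x' t ≤ a}).Nonempty := by
          rw [Set.nonempty_iff_ne_empty]
          intro he
          exact h (by unfold vterm; rw [he]; simp)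
        obtain ⟨t, htV, _, ht2⟩ := this
        have := hVlo t htV
        linarith
    have hDxa : Dx x' a ≤ ENNReal.ofReal τ₅ := le_trans (Dx_anti x' haβ.le) hβD
    have hDg : Dx (pert x' U V η) a ≤ c := by
      refine le_trans (boundB hUV hη a) (le_trans ?_ hc)
      exact add_le_add hDxa (measure_mono (Set.inter_subset_left))
    have hDx : Dx x' a ≤ c := le_trans hDxa (le_trans le_self_add hc)
    rw [min_eq_left hDg, min_eq_left hDx]
    exact identityA hx'm hUm hVm hUV hη a

/-- large-`t` integral identity. -/
lemma largeT (hx'm : Measurable x') (hUm : MeasurableSet U)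
    (hVm : MeasurableSet V) (hUV : Disjoint U V) (hη : 0 < η)
    (hUlo : ∀ t ∈ U, uLo < x' t) (hVlo : ∀ t ∈ V, vLo < x' t)
    (hβ0 : 0 < β) (huβ : β + η ≤ uLo) (hvβ : β + η ≤ vLo)
    {τ₅ : ℝ} (hβD : Dx x' β ≤ ENNReal.ofReal τ₅)
    (hm : m0 U = m0 V) (hmfin : m0 V ≠ ⊤)
    {c : ℝ≥0∞} (hc : ENNReal.ofReal τ₅ + m0 V ≤ c) :
    ∫⁻ a in Set.Ioi (0:ℝ), min (Dx (pert x' U V η) a) c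
      = ∫⁻ a in Set.Ioi (0:ℝ), min (Dx x' a) c := by
  have hUpos : ∀ t ∈ U, η < x' t := fun t ht => by
    have := hUlo t ht; linarith
  have hVpos : ∀ t ∈ V, 0 < x' t := fun t ht => by
    have := hVlo t ht; linarith
  have e : ∫⁻ a in Set.Ioi (0:ℝ), (min (Dx (pert x' U V η) a) c + uterm x' U η a)
      = ∫⁻ a in Set.Ioi (0:ℝ), (min (Dx x' a) c + vterm x' V η a) := by
    apply lintegral_congr
    intro a
    exact largeT_pointwise hx'm hUm hVm hUV hη hUlo hVlo hβ0 huβ hvβ hβD hc a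
  rw [lintegral_add_right _ ((uterm_measurable hx'm hUm)),
    lintegral_add_right _ ((vterm_measurable hx'm hVm)),
    uterm_integral hx'm hUm hη hUpos, vterm_integral hx'm hVm hη hVpos, hm] at e
  have hfin : ENNReal.ofReal η * m0 V ≠ ⊤ := ENNReal.mul_ne_top ofReal_ne_top hmfin
  exact ((ENNReal.cancel_of_ne hfin).inj_left).1 e

/-- mid-`t` integral estimate. -/
lemma midT_int (hx'm : Measurable x') (hUm : MeasurableSet U) (hVm : MeasurableSet V)
    (hUV : Disjoint U V) (hη : 0 < η) (hVpos : ∀ t ∈ V, 0 < x' t) (c : ℝ≥0∞) :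
    ∫⁻ a in Set.Ioi (0:ℝ), min (Dx (pert x' U V η) a) c
      ≤ (∫⁻ a in Set.Ioi (0:ℝ), min (Dx x' a) c) + ENNReal.ofReal η * m0 V := by
  calc ∫⁻ a in Set.Ioi (0:ℝ), min (Dx (pert x' U V η) a) c
      ≤ ∫⁻ a in Set.Ioi (0:ℝ), (min (Dx x' a) c + vterm x' V η a) :=
        lintegral_mono fun a => midT hUV hη c a
    _ = (∫⁻ a in Set.Ioi (0:ℝ), min (Dx x' a) c) + ENNReal.ofReal η * m0 V := by
        rw [lintegral_add_right _ ((vterm_measurable hx'm hVm)),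
          vterm_integral hx'm hVm hη hVpos]

end Perturb


/-- extraction of a subset of prescribed measure -/
lemma exists_subset_measure {S : Set ℝ} (hS : MeasurableSet S) {m'' : ℝ} (h0 : 0 < m'')
    (hlt : ENNReal.ofReal m'' < m0 S) (hfin : m0 S ≠ ⊤) :
    ∃ S' : Set ℝ, S' ⊆ S ∧ MeasurableSet S' ∧ m0 S' = ENNReal.ofReal m'' := by
  set φ : ℝ → ℝ := fun r => (m0 (S ∩ Set.Ioo 0 r)).toReal with hφ
  have hfin' : ∀ r, m0 (S ∩ Set.Ioo 0 r) ≠ ⊤ :=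
    fun r => (lt_of_le_of_lt (measure_mono Set.inter_subset_left) (lt_top_iff_ne_top.2 hfin)).ne
  have hmono : ∀ r r', r ≤ r' → φ r ≤ φ r' := by
    intro r r' h
    apply ENNReal.toReal_mono (hfin' r')
    exact measure_mono (Set.inter_subset_inter_right _ (Set.Ioo_subset_Ioo_right h))
  have hlip : ∀ r r', r ≤ r' → φ r' - φ r ≤ r' - r := by
    intro r r' h
    have hsub : S ∩ Set.Ioo 0 r' ⊆ (S ∩ Set.Ioo 0 r) ∪ Set.Ico r r' := by
      rintro u ⟨hu1, hu2, hu3⟩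
      rcases lt_or_ge u r with h4 | h4
      · exact Or.inl ⟨hu1, hu2, h4⟩
      · exact Or.inr ⟨h4, hu3⟩
    have h1 : m0 (S ∩ Set.Ioo 0 r') ≤ m0 (S ∩ Set.Ioo 0 r) + ENNReal.ofReal (r' - r) := by
      refine le_trans (measure_mono hsub) (le_trans (measure_union_le _ _) ?_)
      apply add_le_add le_rfl
      have : m0 (Set.Ico r r') ≤ volume (Set.Ico r r') := by
        unfold m0
        rw [Measure.restrict_apply' measurableSet_Ioi]
        exact measure_mono Set.inter_subset_left
      refine le_trans this ?_
      rw [Real.volume_Ico]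
    have := ENNReal.toReal_mono (by
      exact ENNReal.add_ne_top.2 ⟨hfin' r, ofReal_ne_top⟩) h1
    rw [ENNReal.toReal_add (hfin' r) ofReal_ne_top, ENNReal.toReal_ofReal (by linarith)] at this
    change φ r' ≤ φ r + (r' - r) at this
    linarith
  have hcont : Continuous φ := by
    apply LipschitzWith.continuous (K := 1)
    apply LipschitzWith.of_dist_le_mul
    intro r r'
    rw [Real.dist_eq, Real.dist_eq]
    rcases le_total r r' with h | h
    · rw [abs_of_nonpos (by linarith [hmono r r' h]), abs_of_nonpos (by linarith)]
      have := hlip r r' h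
      simp only [NNReal.coe_one, one_mul]
      linarith
    · rw [abs_of_nonneg (by linarith [hmono r' r h]), abs_of_nonneg (by linarith)]
      have := hlip r' r h
      simp only [NNReal.coe_one, one_mul]
      linarith
  have hR : ∃ R : ℝ, 0 ≤ R ∧ m'' < φ R := by
    have hU : (⋃ n : ℕ, S ∩ Set.Ioo 0 (n : ℝ)) = S ∩ Set.Ioi 0 := by
      ext u
      simp only [Set.mem_iUnion, Set.mem_inter_iff, Set.mem_Ioo, Set.mem_Ioi]
      constructor
      · rintro ⟨n, h1, h2, _⟩; exact ⟨h1, h2⟩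
      · rintro ⟨h1, h2⟩
        obtain ⟨n, hn⟩ := exists_nat_gt u
        exact ⟨n, h1, h2, hn⟩
    have hmS : m0 (S ∩ Set.Ioi 0) = m0 S := by
      unfold m0
      rw [Measure.restrict_apply' measurableSet_Ioi, Measure.restrict_apply' measurableSet_Ioi]
      congr 1
      rw [Set.inter_assoc, Set.inter_self]
    have hdir : Monotone fun n : ℕ => S ∩ Set.Ioo 0 (n:ℝ) := by
      intro n m hnm
      exact Set.inter_subset_inter_right _ (Set.Ioo_subset_Ioo_right (by exact_mod_cast hnm))
    have := Directed.measure_iUnion (μ := m0) hdir.directed_le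
    rw [hU, hmS] at this
    have hlt2 : ENNReal.ofReal m'' < ⨆ n : ℕ, m0 (S ∩ Set.Ioo 0 (n:ℝ)) := this ▸ hlt
    obtain ⟨n, hn⟩ := lt_iSup_iff.1 hlt2
    refine ⟨n, Nat.cast_nonneg n, ?_⟩
    have := ENNReal.toReal_lt_toReal ofReal_ne_top (hfin' n) |>.2 hn
    rw [ENNReal.toReal_ofReal h0.le] at this
    exact this
  obtain ⟨R, hR0, hRm⟩ := hR
  have hφ0 : φ 0 = 0 := by
    simp [hφ]
  have hIVT := intermediate_value_Icc hR0 hcont.continuousOn (a := 0) (b := R)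
  have hmem : m'' ∈ Set.Icc (φ 0) (φ R) := by
    rw [hφ0]
    exact ⟨h0.le, hRm.le⟩
  obtain ⟨r, _, hr⟩ := hIVT hmem
  refine ⟨S ∩ Set.Ioo 0 r, Set.inter_subset_left, hS.inter measurableSet_Ioo, ?_⟩
  rw [← hr, hφ, ofReal_toReal (hfin' r)]

/-- Lipschitz continuity of partial integrals of `rearr` -/
lemma F_continuousOn {f : ℝ → ℝ} (hf : Integrable f m0) {a b : ℝ} (ha : 0 < a) :
    ContinuousOn (fun t => ∫ s in Set.Ioc (0:ℝ) t, rearr f s) (Set.Icc a b) := by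
  rcases le_or_gt b a with hab | hab
  · -- degenerate interval
    rcases lt_or_eq_of_le hab with h | h
    · rw [Set.Icc_eq_empty (by linarith)]
      exact continuousOn_empty _
    · rw [h, Set.Icc_self]
      exact continuousOn_singleton _ _
  set C := rearr f a with hC
  have hC0 : 0 ≤ C := rearr_nonneg f a
  have key : ∀ t ∈ Set.Icc a b, ∀ t' ∈ Set.Icc a b, t ≤ t' →
      (0 ≤ (∫ s in Set.Ioc (0:ℝ) t', rearr f s) - ∫ s in Set.Ioc (0:ℝ) t, rearr f s ∧
       (∫ s in Set.Ioc (0:ℝ) t', rearr f s) - (∫ s in Set.Ioc (0:ℝ) t, rearr f s) ≤ C * (t' - t)) := by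
    intro t ht t' ht' htt'
    have hsplit : Set.Ioc (0:ℝ) t ∪ Set.Ioc t t' = Set.Ioc 0 t' :=
      Set.Ioc_union_Ioc_eq_Ioc (by linarith [ht.1]) htt'
    have hint1 : IntegrableOn (rearr f) (Set.Ioc 0 t) volume :=
      (integrableOn_rearr hf b).mono_set (Set.Ioc_subset_Ioc le_rfl ht.2)
    have hint2 : IntegrableOn (rearr f) (Set.Ioc t t') volume :=
      (integrableOn_rearr hf b).mono_set (Set.Ioc_subset_Ioc (by linarith [ht.1]) ht'.2)
    have hdisj : Disjoint (Set.Ioc (0:ℝ) t) (Set.Ioc t t') := Set.Ioc_disjoint_Ioc_of_le le_rfl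
    have hsum : ∫ s in Set.Ioc (0:ℝ) t', rearr f s
        = (∫ s in Set.Ioc (0:ℝ) t, rearr f s) + ∫ s in Set.Ioc t t', rearr f s := by
      rw [← hsplit]
      exact setIntegral_union hdisj measurableSet_Ioc hint1 hint2
    constructor
    · rw [hsum]
      have : 0 ≤ ∫ s in Set.Ioc t t', rearr f s :=
        setIntegral_nonneg measurableSet_Ioc (fun s _ => rearr_nonneg f s)
      linarith
    · rw [hsum]
      have hbound : ∀ s ∈ Set.Ioc t t', ‖rearr f s‖ ≤ C := by
        intro s hs
        rw [Real.norm_eq_abs, abs_of_nonneg (rearr_nonneg f s)]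
        exact rearr_antitoneOn hf (Set.mem_Ioi.2 ha) (Set.mem_Ioi.2 (by linarith [ht.1, hs.1]))
          (by linarith [ht.1, hs.1])
      have hnorm := norm_setIntegral_le_of_norm_le_const (C := C)
        (by rw [Real.volume_Ioc]; exact ofReal_lt_top) hbound
      unfold Measure.real at hnorm
      have h2 : (volume (Set.Ioc t t')).toReal = t' - t := by
        rw [Real.volume_Ioc, ENNReal.toReal_ofReal (by linarith)]
      rw [h2] at hnorm
      have h3 : ∫ s in Set.Ioc t t', rearr f s ≤ C * (t' - t) :=
        le_trans (le_abs_self _) (by rw [← Real.norm_eq_abs]; exact hnorm)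
      linarith
  apply LipschitzOnWith.continuousOn (K := Real.toNNReal C)
  apply LipschitzOnWith.of_dist_le_mul
  intro t ht t' ht'
  rw [Real.dist_eq, Real.dist_eq]
  have hCC : (Real.toNNReal C : ℝ) = C := Real.coe_toNNReal C hC0
  rcases le_total t t' with h | h
  · obtain ⟨h1, h2⟩ := key t ht t' ht' h
    rw [abs_of_nonpos (by linarith), abs_of_nonpos (by linarith), hCC]
    linarith
  · obtain ⟨h1, h2⟩ := key t' ht' t ht h
    rw [abs_of_nonneg (by linarith), abs_of_nonneg (by linarith), hCC]
    linarith


lemma Phi_congr {f g : ℝ → ℝ} (h : dd f = dd g) (T : ℝ) : Phi f T = Phi g T := by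
  unfold Phi; rw [h]

lemma Phi_eq_Dx (h : ℝ → ℝ) (T : ℝ) :
    Phi (posPart' h) T = ∫⁻ a in Set.Ioi (0:ℝ), min (Dx h a) (ENNReal.ofReal T) := by
  unfold Phi
  apply setLIntegral_congr_fun measurableSet_Ioi
  intro a ha
  beta_reduce
  rw [dd_posPart h (le_of_lt ha)]
  rfl

lemma core {x y : ℝ → ℝ} (hy : Integrable y m0) (hx : Integrable x m0) (hmaj : Maj x y)
    (hext : ∀ x₁ x₂ : ℝ → ℝ,
      IntegrableOn x₁ (Set.Ioi 0) → Maj x₁ y →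
      IntegrableOn x₂ (Set.Ioi 0) → Maj x₂ y →
      (∀ᵐ t ∂(volume.restrict (Set.Ioi (0:ℝ))), x t = (x₁ t + x₂ t) / 2) →
      x₁ =ᵐ[volume.restrict (Set.Ioi (0:ℝ))] x₂)
    {τ₀ τ₁ τ₂ τ₃ τ₄ τ₅ T : ℝ} (h00 : 0 < τ₀) (h01 : τ₀ < τ₁) (h12 : τ₁ < τ₂)
    (h23 : τ₂ < τ₃) (h34 : τ₃ < τ₄) (h45 : τ₄ < τ₅) (h5T : τ₅ < T)
    (hv5 : 0 < rearr (posPart' x) τ₅)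
    (hv54 : rearr (posPart' x) τ₅ < rearr (posPart' x) τ₄)
    (hv43 : rearr (posPart' x) τ₄ < rearr (posPart' x) τ₃)
    (hv32 : rearr (posPart' x) τ₃ < rearr (posPart' x) τ₂)
    (hv21 : rearr (posPart' x) τ₂ < rearr (posPart' x) τ₁)
    (hv10 : rearr (posPart' x) τ₁ < rearr (posPart' x) τ₀)
    (hstrictW : ∀ u : ℝ, τ₀ ≤ u → u ≤ T →
      (∫ t in Set.Ioc (0:ℝ) u, rearr (posPart' x) t)
        < ∫ t in Set.Ioc (0:ℝ) u, rearr (posPart' y) t) :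
    False := by
  -- measurable representative of x
  have hxm := hx.1
  set x' : ℝ → ℝ := hxm.mk x with hx'def
  have hx'meas : Measurable x' := hxm.stronglyMeasurable_mk.measurable
  have hx'ae : x =ᵐ[m0] x' := hxm.ae_eq_mk
  have hx'int : Integrable x' m0 := hx.congr hx'ae
  have hposae : posPart' x =ᵐ[m0] posPart' x' := by
    filter_upwards [hx'ae] with t ht
    unfold posPart'
    rw [ht]
  have hre : rearr (posPart' x) = rearr (posPart' x') := rearr_congr hposae
  have hfxint : Integrable (posPart' x) m0 := hx.pos_part
  have hfx'int : Integrable (posPart' x') m0 := hx'int.pos_part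
  have hfyint : Integrable (posPart' y) m0 := hy.pos_part
  set v₀ := rearr (posPart' x) τ₀ with hv₀
  set v₁ := rearr (posPart' x) τ₁ with hv₁
  set v₂ := rearr (posPart' x) τ₂ with hv₂
  set v₃ := rearr (posPart' x) τ₃ with hv₃
  set v₄ := rearr (posPart' x) τ₄ with hv₄
  set v₅ := rearr (posPart' x) τ₅ with hv₅
  -- basic distribution facts
  have hDgt : ∀ (τ a : ℝ), 0 < τ → 0 ≤ a → a < rearr (posPart' x) τ →
      ENNReal.ofReal τ < Dx x' a := by
    intro τ a hτ ha hav
    have h1 : a < rearr (posPart' x') τ := by rw [← hre]; exact hav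
    have h2 := (lt_rearr_iff hfx'int hτ ha).1 h1
    rwa [dd_posPart x' ha] at h2
  have hDle : ∀ τ : ℝ, 0 < τ → Dx x' (rearr (posPart' x) τ) ≤ ENNReal.ofReal τ := by
    intro τ hτ
    by_contra hcon
    push_neg at hcon
    have h2 := (lt_rearr_iff hfx'int hτ (rearr_nonneg (posPart' x) τ)).2
      (by rwa [dd_posPart x' (rearr_nonneg (posPart' x) τ)])
    rw [← hre] at h2
    exact lt_irrefl _ h2
  have hγD : ∀ a : ℝ, 0 ≤ a → a < v₀ → ENNReal.ofReal τ₀ < Dx x' a :=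
    fun a ha hav => hDgt τ₀ a h00 ha hav
  have hβD : Dx x' v₅ ≤ ENNReal.ofReal τ₅ := hDle τ₅ (by linarith)
  -- generic slab existence
  have hslab : ∀ (τlo τhi : ℝ), 0 < τhi → τhi < τlo →
      0 < rearr (posPart' x) τlo →
      rearr (posPart' x) τlo < rearr (posPart' x) τhi →
      (m0 ({t | rearr (posPart' x) τlo < x' t} ∩ {t | x' t ≤ rearr (posPart' x) τhi}) ≠ 0
        ∧ m0 ({t | rearr (posPart' x) τlo < x' t} ∩ {t | x' t ≤ rearr (posPart' x) τhi}) ≠ ⊤) := by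
    intro τlo τhi hτhi hττ hlo hvv
    set lo := rearr (posPart' x) τlo
    set hi := rearr (posPart' x) τhi
    constructor
    · intro hzero
      have hsub : {t | lo < x' t} ⊆ ({t | lo < x' t} ∩ {t | x' t ≤ hi}) ∪ {t | hi < x' t} := by
        intro t ht
        simp only [Set.mem_setOf_eq] at ht
        rcases le_or_gt (x' t) hi with h | h
        · exact Or.inl ⟨ht, h⟩
        · exact Or.inr h
      have h1 : Dx x' lo ≤ m0 (({t | lo < x' t} ∩ {t | x' t ≤ hi}) ∪ {t | hi < x' t}) :=
        measure_mono hsub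
      have h2 := le_trans h1 (measure_union_le _ _)
      rw [hzero, zero_add] at h2
      have h3 : ENNReal.ofReal τhi < Dx x' lo := hDgt τhi lo hτhi hlo.le hvv
      have h4 : Dx x' hi ≤ ENNReal.ofReal τhi := hDle τhi hτhi
      exact absurd (le_trans h2 h4) (not_le.mpr h3)
    · intro htop
      have h1 : m0 ({t | lo < x' t} ∩ {t | x' t ≤ hi}) ≤ Dx x' lo :=
        measure_mono Set.inter_subset_left
      have h2 : Dx x' lo < ⊤ := by
        unfold Dx
        rw [← dd_posPart x' hlo.le]
        exact dd_lt_top hfx'int hlo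
      rw [htop] at h1
      exact absurd (lt_of_le_of_lt h1 h2) (lt_irrefl ⊤)
  set P := {t | v₂ < x' t} ∩ {t | x' t ≤ v₁} with hPdef
  set Q := {t | v₄ < x' t} ∩ {t | x' t ≤ v₃} with hQdef
  have hPm : MeasurableSet P :=
    (measurableSet_lt measurable_const hx'meas).inter (measurableSet_le hx'meas measurable_const)
  have hQm : MeasurableSet Q :=
    (measurableSet_lt measurable_const hx'meas).inter (measurableSet_le hx'meas measurable_const)
  have hPmass := hslab τ₂ τ₁ (by linarith) h12 (by linarith) hv21
  have hQmass := hslab τ₄ τ₃ (by linarith) h34 (by linarith) hv43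
  -- choose m''
  set m'' := min (min ((m0 P).toReal/2) ((m0 Q).toReal/2)) ((T - τ₅)/2) with hm''def
  have hPt : 0 < (m0 P).toReal := ENNReal.toReal_pos hPmass.1 hPmass.2
  have hQt : 0 < (m0 Q).toReal := ENNReal.toReal_pos hQmass.1 hQmass.2
  have hm''pos : 0 < m'' := by
    apply lt_min (lt_min (by linarith) (by linarith)) (by linarith)
  have hofm : ∀ S : Set ℝ, m0 S ≠ ⊤ → m'' ≤ (m0 S).toReal/2 → ENNReal.ofReal m'' < m0 S := by
    intro S hfin hle
    have h1 : 0 < (m0 S).toReal := by linarith [hm''pos]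
    have h2 : m'' < (m0 S).toReal := by linarith
    calc ENNReal.ofReal m'' < ENNReal.ofReal ((m0 S).toReal) := by
          rw [ofReal_lt_ofReal_iff h1]; exact h2
      _ = m0 S := ofReal_toReal hfin
  obtain ⟨P', hP'sub, hP'meas, hP'vol⟩ := exists_subset_measure hPm hm''pos
    (hofm P hPmass.2 (le_trans (min_le_left _ _) (min_le_left _ _))) hPmass.2
  obtain ⟨Q', hQ'sub, hQ'meas, hQ'vol⟩ := exists_subset_measure hQm hm''pos
    (hofm Q hQmass.2 (le_trans (min_le_left _ _) (min_le_right _ _))) hQmass.2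
  have hPQdisj : Disjoint P' Q' := by
    rw [Set.disjoint_left]
    intro t htP htQ
    have h1 := (hP'sub htP).1
    have h2 := (hQ'sub htQ).2
    simp only [Set.mem_setOf_eq] at h1 h2
    linarith
  have hPlo : ∀ t ∈ P', v₂ < x' t := fun t ht => (hP'sub ht).1
  have hPhi : ∀ t ∈ P', x' t ≤ v₁ := fun t ht => (hP'sub ht).2
  have hQlo : ∀ t ∈ Q', v₄ < x' t := fun t ht => (hQ'sub ht).1
  have hQhi : ∀ t ∈ Q', x' t ≤ v₃ := fun t ht => (hQ'sub ht).2
  -- T₁ and δ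
  set T₁ := τ₅ + m'' with hT₁def
  have hT₁T : T₁ < T := by
    have : m'' ≤ (T - τ₅)/2 := min_le_right _ _
    simp only [hT₁def]
    linarith
  set F := fun u : ℝ => ∫ t in Set.Ioc (0:ℝ) u, rearr (posPart' x) t with hFdef
  set G := fun u : ℝ => ∫ t in Set.Ioc (0:ℝ) u, rearr (posPart' y) t with hGdef
  have hτ₀T₁ : τ₀ < T₁ := by simp only [hT₁def]; linarith
  have hcont : ContinuousOn (fun u => G u - F u) (Set.Icc τ₀ T₁) :=
    (F_continuousOn hfyint h00).sub (F_continuousOn hfxint h00)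
  obtain ⟨z, hzK, hzmin⟩ := isCompact_Icc.exists_isMinOn ⟨τ₀, le_refl _, hτ₀T₁.le⟩ hcont
  set δ := G z - F z with hδdef
  have hδpos : 0 < δ := sub_pos.2 (hstrictW z hzK.1 (le_trans hzK.2 hT₁T.le))
  have hδle : ∀ u ∈ Set.Icc τ₀ T₁, δ ≤ G u - F u := fun u hu => isMinOn_iff.1 hzmin u hu
  -- η
  set η := min (min ((v₀ - v₁)/2) ((v₂ - v₃)/2)) (min ((v₄ - v₅)/2) (δ/(2*m''))) with hηdef
  have hη1 : η ≤ (v₀ - v₁)/2 := le_trans (min_le_left _ _) (min_le_left _ _)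
  have hη2 : η ≤ (v₂ - v₃)/2 := le_trans (min_le_left _ _) (min_le_right _ _)
  have hη3 : η ≤ (v₄ - v₅)/2 := le_trans (min_le_right _ _) (min_le_left _ _)
  have hη4 : η ≤ δ/(2*m'') := le_trans (min_le_right _ _) (min_le_right _ _)
  have hηpos : 0 < η := by
    apply lt_min (lt_min (by linarith) (by linarith))
    apply lt_min (by linarith)
    positivity
  have hηm : η * m'' ≤ δ := by
    have h1 : η * m'' ≤ (δ/(2*m'')) * m'' := by
      apply mul_le_mul_of_nonneg_right hη4 hm''pos.le
    have h2 : (δ/(2*m'')) * m'' = δ/2 := by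
      field_simp
    rw [h2] at h1
    linarith
  -- integrability of perturbations
  have hindP : Integrable (Set.indicator P' (fun _ => η)) m0 := by
    rw [integrable_indicator_iff hP'meas]
    refine integrableOn_const ?_
    exact (by rw [hP'vol]; exact ofReal_ne_top)
  have hindQ : Integrable (Set.indicator Q' (fun _ => η)) m0 := by
    rw [integrable_indicator_iff hQ'meas]
    refine integrableOn_const ?_
    exact (by rw [hQ'vol]; exact ofReal_ne_top)
  have hpertint : ∀ U V : Set ℝ, Integrable (Set.indicator U (fun _ => η)) m0 →
      Integrable (Set.indicator V (fun _ => η)) m0 → Integrable (pert x' U V η) m0 := by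
    intro U V hU hV
    unfold pert
    exact (hx'int.add hV).sub hU
  have hg₁int : Integrable (pert x' P' Q' η) m0 := hpertint P' Q' hindP hindQ
  have hg₂int : Integrable (pert x' Q' P' η) m0 := hpertint Q' P' hindQ hindP
  -- Phi helpers
  have hPhiX : ∀ u : ℝ, Phi (posPart' x) u
      = ∫⁻ a in Set.Ioi (0:ℝ), min (Dx x' a) (ENNReal.ofReal u) := by
    intro u
    rw [Phi_congr (dd_congr hposae) u, Phi_eq_Dx]
  have hFnn : ∀ u : ℝ, 0 ≤ F u :=
    fun u => setIntegral_nonneg measurableSet_Ioc (fun s _ => rearr_nonneg _ s)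
  -- generic positive-part submajorization for a perturbation
  have keypos : ∀ (U V : Set ℝ) (uLo uHi vLo vHi : ℝ), MeasurableSet U → MeasurableSet V →
      Disjoint U V → Integrable (pert x' U V η) m0 →
      (∀ t ∈ U, uLo < x' t) → (∀ t ∈ U, x' t ≤ uHi) →
      (∀ t ∈ V, vLo < x' t) → (∀ t ∈ V, x' t ≤ vHi) →
      m0 U = ENNReal.ofReal m'' → m0 V = ENNReal.ofReal m'' →
      (v₅ + η ≤ uLo) → (v₅ + η ≤ vLo) → (uHi + 2*η ≤ v₀) → (vHi + 2*η ≤ v₀) →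
      SubMaj (posPart' (pert x' U V η)) (posPart' y) := by
    intro U V uLo uHi vLo vHi hUm hVm hUV hgi hUlo hUhi hVlo hVhi hmU hmV huβ hvβ huγ hvγ
    intro t ht0
    rcases eq_or_lt_of_le ht0 with h0 | hpos
    · rw [← h0, Set.Ioc_self]
      simp
    have hgposint : Integrable (posPart' (pert x' U V η)) m0 := hgi.pos_part
    rw [bridge hgposint hpos, bridge hfyint hpos]
    apply ENNReal.toReal_mono (Phi_lt_top hfyint t).ne
    have hgD : Phi (posPart' (pert x' U V η)) t
        = ∫⁻ a in Set.Ioi (0:ℝ), min (Dx (pert x' U V η) a) (ENNReal.ofReal t) :=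
      Phi_eq_Dx _ t
    have hxy : Phi (posPart' x) t ≤ Phi (posPart' y) t := by
      rw [← ofReal_integral_rearr hfxint hpos, ← ofReal_integral_rearr hfyint hpos]
      exact ofReal_le_ofReal (hmaj.1 t ht0)
    have hVpos : ∀ s ∈ V, 0 < x' s := by
      intro s hs
      have := hVlo s hs
      linarith
    rcases le_or_gt t τ₀ with hcase1 | hcase1
    · refine le_trans ?_ hxy
      rw [hgD, hPhiX t]
      apply lintegral_mono_ae
      filter_upwards [self_mem_ae_restrict measurableSet_Ioi] with a ha
      exact smallT hUV hηpos hUhi hVhi huγ hvγ hγD (ofReal_le_ofReal hcase1) (le_of_lt ha)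
    rcases le_or_gt t T₁ with hcase2 | hcase2
    · -- mid regime
      have hmid := midT_int hx'meas hUm hVm hUV hηpos hVpos (ENNReal.ofReal t)
      rw [hgD]
      refine le_trans hmid ?_
      rw [hmV, ← ENNReal.ofReal_mul hηpos.le, ← hPhiX t]
      have hF : Phi (posPart' x) t = ENNReal.ofReal (F t) :=
        (ofReal_integral_rearr hfxint hpos).symm
      have hG : Phi (posPart' y) t = ENNReal.ofReal (G t) :=
        (ofReal_integral_rearr hfyint hpos).symm
      rw [hF, hG, ← ENNReal.ofReal_add (hFnn t) (by positivity)]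
      apply ofReal_le_ofReal
      have := hδle t ⟨hcase1.le, hcase2⟩
      have := hηm
      simp only [hFdef, hGdef] at *
      linarith
    · -- large regime
      have hc : ENNReal.ofReal τ₅ + m0 V ≤ ENNReal.ofReal t := by
        rw [hmV, ← ENNReal.ofReal_add (by linarith) hm''pos.le]
        apply ofReal_le_ofReal
        simp only [hT₁def] at hcase2
        linarith
      have hβuse : Dx x' v₅ ≤ ENNReal.ofReal τ₅ := hβD
      have hlarge := largeT hx'meas hUm hVm hUV hηpos hUlo hVlo (by linarith : (0:ℝ) < v₅)
        huβ hvβ hβuse (by rw [hmU, hmV]) (by rw [hmV]; exact ofReal_ne_top) hc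
      rw [hgD, hlarge, ← hPhiX t]
      exact hxy
  -- generic negative-part equality
  have keyneg : ∀ (U V : Set ℝ), Disjoint U V → (∀ t ∈ U, η < x' t) → (∀ t ∈ V, 0 < x' t) →
      SubMaj (negPart' (pert x' U V η)) (negPart' y) := by
    intro U V hUV hU hV
    have heq : negPart' (pert x' U V η) = negPart' x' := by
      funext t
      unfold negPart'
      by_cases htU : t ∈ U
      · rw [pert_of_mem_U hUV htU]
        have := hU t htU
        rw [max_eq_right (by linarith), max_eq_right (by linarith)]
      · by_cases htV : t ∈ V
        · rw [pert_of_mem_V hUV htV]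
          have := hV t htV
          rw [max_eq_right (by linarith), max_eq_right (by linarith)]
        · rw [pert_of_not_mem htU htV]
    have hae : negPart' (pert x' U V η) =ᵐ[m0] negPart' x := by
      rw [heq]
      filter_upwards [hx'ae] with t ht
      unfold negPart'
      rw [ht]
    have hre2 : rearr (negPart' (pert x' U V η)) = rearr (negPart' x) := rearr_congr hae
    intro t ht
    rw [hre2]
    exact hmaj.2.1 t ht
  -- integral identity
  have keyint : ∀ (U V : Set ℝ), MeasurableSet U → MeasurableSet V →
      m0 U = ENNReal.ofReal m'' → m0 V = ENNReal.ofReal m'' →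
      Integrable (Set.indicator U (fun _ => η)) m0 →
      Integrable (Set.indicator V (fun _ => η)) m0 →
      (∫ s in Set.Ioi (0:ℝ), pert x' U V η s) = ∫ s in Set.Ioi (0:ℝ), y s := by
    intro U V hUm hVm hmU hmV hiU hiV
    have h1 : (∫ s in Set.Ioi (0:ℝ), pert x' U V η s)
        = (∫ s, x' s ∂m0) + (∫ s, Set.indicator V (fun _ => η) s ∂m0)
          - ∫ s, Set.indicator U (fun _ => η) s ∂m0 := by
      show (∫ s, pert x' U V η s ∂m0) = _
      unfold pert
      have hsum : Integrable (fun s => x' s + Set.indicator V (fun _ => η) s) m0 := by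
        exact hx'int.add hiV
      have hiU' : Integrable (fun s => Set.indicator U (fun _ => η) s) m0 := by exact hiU
      have hiV' : Integrable (fun s => Set.indicator V (fun _ => η) s) m0 := by exact hiV
      have hx'int' : Integrable (fun s => x' s) m0 := by exact hx'int
      rw [integral_sub hsum hiU', integral_add hx'int' hiV']
    have h2 : (∫ s, Set.indicator V (fun _ => η) s ∂m0) = (m0 V).toReal • η :=
      integral_indicator_const η hVm
    have h3 : (∫ s, Set.indicator U (fun _ => η) s ∂m0) = (m0 U).toReal • η :=
      integral_indicator_const η hUm
    rw [h1, h2, h3, hmU, hmV]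
    have h4 : (∫ s, x' s ∂m0) = ∫ s in Set.Ioi (0:ℝ), x s := integral_congr_ae hx'ae.symm
    rw [h4]
    simp only [smul_eq_mul]
    have := hmaj.2.2
    linarith [hmaj.2.2]
  -- assemble Maj for both perturbations
  have hMaj₁ : Maj (pert x' P' Q' η) y := by
    refine ⟨?_, ?_, ?_⟩
    · apply keypos P' Q' v₂ v₁ v₄ v₃ hP'meas hQ'meas hPQdisj hg₁int hPlo hPhi hQlo hQhi
        hP'vol hQ'vol (by linarith) (by linarith) (by linarith) (by linarith)
    · apply keyneg P' Q' hPQdisj (fun t ht => by have := hPlo t ht; linarith)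
        (fun t ht => by have := hQlo t ht; linarith)
    · exact keyint P' Q' hP'meas hQ'meas hP'vol hQ'vol hindP hindQ
  have hMaj₂ : Maj (pert x' Q' P' η) y := by
    refine ⟨?_, ?_, ?_⟩
    · apply keypos Q' P' v₄ v₃ v₂ v₁ hQ'meas hP'meas hPQdisj.symm hg₂int hQlo hQhi hPlo hPhi
        hQ'vol hP'vol (by linarith) (by linarith) (by linarith) (by linarith)
    · apply keyneg Q' P' hPQdisj.symm (fun t ht => by have := hQlo t ht; linarith)
        (fun t ht => by have := hPlo t ht; linarith)
    · exact keyint Q' P' hQ'meas hP'meas hQ'vol hP'vol hindQ hindP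
  -- averaging
  have havg : ∀ᵐ t ∂(volume.restrict (Set.Ioi (0:ℝ))),
      x t = (pert x' P' Q' η t + pert x' Q' P' η t) / 2 := by
    have : ∀ t, pert x' P' Q' η t + pert x' Q' P' η t = 2 * x' t := by
      intro t
      unfold pert
      ring
    filter_upwards [hx'ae] with t ht
    rw [this t, ht]
    ring
  have hfinal := hext (pert x' P' Q' η) (pert x' Q' P' η) hg₁int hMaj₁ hg₂int hMaj₂ havg
  -- contradiction on P'
  have hne : ∀ t ∈ P', pert x' P' Q' η t ≠ pert x' Q' P' η t := by
    intro t ht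
    rw [pert_of_mem_U hPQdisj ht, pert_of_mem_V hPQdisj.symm ht]
    intro h
    have : η = 0 := by linarith
    linarith
  have hsub : P' ⊆ {t | pert x' P' Q' η t ≠ pert x' Q' P' η t} := fun t ht => hne t ht
  have hmzero : m0 {t | pert x' P' Q' η t ≠ pert x' Q' P' η t} = 0 := by
    have := hfinal
    rw [Filter.EventuallyEq, ae_iff] at this
    exact this
  have : m0 P' = 0 := measure_mono_null hsub hmzero
  rw [hP'vol] at this
  simp only [ofReal_eq_zero] at this
  linarith


end S19

/-- If `x` is an extreme point of `Ω(y)` and `∫₀ˢ μ(y₊) > ∫₀ˢ μ(x₊)` strictly on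
`(t₁, t₂)` (with `t₂ ≤ ∞`, formalized via `EReal`), then `μ(x₊)` is constant on some
right neighborhood of every point of `[t₁, t₂)`; i.e. it is a step function there. -/
theorem stmt19 (y x : ℝ → ℝ) (hy : IntegrableOn y (Set.Ioi 0))
    (hx : IntegrableOn x (Set.Ioi 0)) (hmaj : Maj x y)
    (hext : ∀ x₁ x₂ : ℝ → ℝ,
      IntegrableOn x₁ (Set.Ioi 0) → Maj x₁ y →
      IntegrableOn x₂ (Set.Ioi 0) → Maj x₂ y →
      (∀ᵐ t ∂(volume.restrict (Set.Ioi (0:ℝ))), x t = (x₁ t + x₂ t) / 2) →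
      x₁ =ᵐ[volume.restrict (Set.Ioi (0:ℝ))] x₂)
    (t₁ : ℝ) (t₂ : EReal) (ht₁ : 0 ≤ t₁) (ht : (t₁ : EReal) < t₂)
    (hstrict : ∀ s : ℝ, t₁ < s → (s : EReal) < t₂ →
      (∫ t in Set.Ioc (0:ℝ) s, rearr (posPart' x) t) <
        ∫ t in Set.Ioc (0:ℝ) s, rearr (posPart' y) t) :
    ∀ s : ℝ, t₁ ≤ s → (s : EReal) < t₂ →
      ∃ ε : ℝ, 0 < ε ∧ ∀ u ∈ Set.Ico s (s + ε),
        rearr (posPart' x) u = rearr (posPart' x) s := by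
  intro s hs1 hs2
  by_contra hcon
  push_neg at hcon
  have hxm0 : Integrable x S19.m0 := hx
  have hym0 : Integrable y S19.m0 := hy
  have hfx : Integrable (posPart' x) S19.m0 := hxm0.pos_part
  have hs0 : 0 ≤ s := le_trans ht₁ hs1
  -- pick a real `T` with `s < T` and `(T : EReal) < t₂`
  obtain ⟨T', hT'1, hT'2⟩ := exists_between hs2
  have hT'netop : T' ≠ ⊤ := by
    intro h
    rw [h] at hT'2
    exact absurd hT'2 (not_lt.mpr le_top)
  have hT'nebot : T' ≠ ⊥ := by
    intro h
    rw [h] at hT'1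
    exact absurd hT'1 (not_lt.mpr bot_le)
  set T := T'.toReal with hTdef
  have hTcast : (T : EReal) = T' := EReal.coe_toReal hT'netop hT'nebot
  have hsT : s < T := by
    have : (s : EReal) < (T : EReal) := by rw [hTcast]; exact hT'1
    exact_mod_cast this
  have hfail : ∀ ε : ℝ, 0 < ε → ∃ u, u ∈ Set.Ico s (s + ε) ∧
      rearr (posPart' x) u ≠ rearr (posPart' x) s := by
    intro ε hε
    obtain ⟨u, hu1, hu2⟩ := hcon ε hε
    exact ⟨u, hu1, hu2⟩
  obtain ⟨τ₀, τ₁, τ₂, τ₃, τ₄, τ₅, ha0, h01, h12, h23, h34, h45, h5T, hv5, hv54, hv43,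
    hv32, hv21, hv10⟩ := S19.exists_chain hfx hs0 hsT hfail
  have hstrictW : ∀ u : ℝ, τ₀ ≤ u → u ≤ T →
      (∫ t in Set.Ioc (0:ℝ) u, rearr (posPart' x) t)
        < ∫ t in Set.Ioc (0:ℝ) u, rearr (posPart' y) t := by
    intro u h1 h2
    apply hstrict u (by linarith [lt_of_le_of_lt hs1 ha0])
    calc (u : EReal) ≤ (T : EReal) := by exact_mod_cast h2
      _ = T' := hTcast
      _ < t₂ := hT'2
  exact S19.core hym0 hxm0 hmaj hext (by linarith) h01 h12 h23 h34 h45 h5T hv5 hv54 hv43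
    hv32 hv21 hv10 hstrictW
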